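/- For all natural numbers d, i and every n ≥ 1, the numbers A_d(i,n) satisfy the recursion A_d(i,n) = Σ_{r+s+t=d, r+s≤i} (d!/(r!·s!·t!)) · A_{d−r}(i−r−s, n−1), where the sum is over triples (r,s,t) of natural numbers with r+s+t = d and r+s ≤ i, and d!/(r!s!t!) is the multinomial coefficient. -/

import Mathlib

/-- `A_d(i,n) = Σ_{i₁+⋯+i_d = i, each i_s ≥ 1} C(n,i₁)⋯C(n,i_d)`, the sum over all
`d`-tuples of positive integers summing to `i` of products of binomial coefficients. -/
def Acoef (d i n : ℕ) : ℕ :=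
  ∑ f ∈ (Finset.Nat.antidiagonalTuple d i).filter (fun f => ∀ s, 1 ≤ f s),
    ∏ s, n.choose (f s)

open Finset Polynomial PowerSeries

noncomputable def q (n : ℕ) : Polynomial ℤ := (Polynomial.X + 1) ^ n - 1

lemma coeff_q (n k : ℕ) : (q n).coeff k = if k = 0 then 0 else (n.choose k : ℤ) := by
  rcases eq_or_ne k 0 with rfl | hk
  · simp [q, coeff_X_add_one_pow]
  · simp [q, coeff_X_add_one_pow, Polynomial.coeff_one, hk]

lemma aux1 (d i n : ℕ) : ∑ l ∈ finsuppAntidiag (range d) i, ∏ j ∈ range d, (PowerSeries.coeff (l j)) (q n : ℤ⟦X⟧)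
      = ∑ f ∈ Finset.Nat.antidiagonalTuple d i,
          ∏ s : Fin d, (if f s = 0 then 0 else (n.choose (f s) : ℤ)) := by
    apply Finset.sum_nbij' (i := fun l => fun s : Fin d => l s.val)
      (j := fun f => Finsupp.indicator (range d) (fun j _ => if h : j < d then f ⟨j, h⟩ else 0))
    · intro l hl
      rw [Finset.mem_finsuppAntidiag] at hl
      rw [Finset.Nat.mem_antidiagonalTuple, Fin.sum_univ_eq_sum_range, hl.1]
    · intro f hf
      rw [Finset.Nat.mem_antidiagonalTuple] at hf
      rw [Finset.mem_finsuppAntidiag]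
      refine ⟨?_, ?_⟩
      · refine Eq.trans (b := ∑ j ∈ range d, if h : j < d then f ⟨j, h⟩ else 0) ?_ ?_
        · exact Finset.sum_congr rfl fun j hj => Finsupp.indicator_of_mem hj _
        · rw [← Fin.sum_univ_eq_sum_range (fun j => if h : j < d then f ⟨j, h⟩ else 0) d, ← hf]
          exact Finset.sum_congr rfl fun s _ => by simp [s.isLt]
      · intro x hx
        by_contra hxr
        exact (Finsupp.mem_support_iff.mp hx) (Finsupp.indicator_of_notMem hxr _)
    · intro l hl
      rw [Finset.mem_finsuppAntidiag] at hl
      ext j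
      by_cases hj : j ∈ range d
      · rw [Finsupp.indicator_of_mem hj, dif_pos (Finset.mem_range.mp hj)]
      · rw [Finsupp.indicator_of_notMem hj]
        by_contra h
        exact hj (hl.2 (Finsupp.mem_support_iff.mpr fun hh => h hh.symm))
    · intro f hf
      funext s
      rw [Finsupp.indicator_of_mem (Finset.mem_range.mpr s.isLt), dif_pos s.isLt, Fin.eta]
    · intro l hl
      rw [← Fin.prod_univ_eq_prod_range (fun j => (PowerSeries.coeff (l j)) (q n : ℤ⟦X⟧)) d]
      exact Finset.prod_congr rfl fun s _ => by
        rw [Polynomial.coeff_coe, coeff_q]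

lemma aux2 (d i n : ℕ) : ∑ f ∈ Finset.Nat.antidiagonalTuple d i,
        ∏ s : Fin d, (if f s = 0 then 0 else (n.choose (f s) : ℤ))
      = ∑ f ∈ (Finset.Nat.antidiagonalTuple d i).filter (fun f => ∀ s, 1 ≤ f s),
          ∏ s : Fin d, (n.choose (f s) : ℤ) := by
    have hside : ∀ f ∈ Finset.Nat.antidiagonalTuple d i,
        (∏ s : Fin d, (if f s = 0 then 0 else (n.choose (f s) : ℤ))) ≠ 0 → ∀ s : Fin d, 1 ≤ f s := by
      intro f _ hne s
      by_contra hs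
      have h0 : f s = 0 := by omega
      exact hne (Finset.prod_eq_zero (Finset.mem_univ s) (by rw [h0]; simp))
    rw [← Finset.sum_filter_of_ne hside]
    refine Finset.sum_congr rfl fun f hf => Finset.prod_congr rfl fun s _ => ?_
    rw [Finset.mem_filter] at hf
    have h0 : ¬ f s = 0 := by have := hf.2 s; omega
    rw [if_neg h0]

lemma coeffA (d i n : ℕ) :
    ((Acoef d i n : ℤ)) = PowerSeries.coeff i (((q n : ℤ[X]) : ℤ⟦X⟧) ^ d) := by
  rw [PowerSeries.coeff_pow, aux1, aux2, Acoef]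
  push_cast
  rfl

lemma qsplit (n : ℕ) (hn : 1 ≤ n) :
    q n = Polynomial.X + (Polynomial.X + 1) * q (n - 1) := by
  unfold q
  have h : (Polynomial.X + 1 : ℤ[X]) ^ n = (Polynomial.X + 1) ^ (n - 1) * (Polynomial.X + 1) := by
    rw [← pow_succ]
    congr 1
    omega
  rw [h]
  ring

lemma coeff_term (r m i n : ℕ) :
    PowerSeries.coeff i
        (PowerSeries.X ^ r * ((PowerSeries.X + 1) ^ m * ((q n : ℤ[X]) : ℤ⟦X⟧) ^ m))
      = ∑ a ∈ range (i + 1),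
          (if r ≤ a then (m.choose (a - r) : ℤ) else 0) * (Acoef m (i - a) n : ℤ) := by
  have hW : (((Polynomial.X ^ r * (Polynomial.X + 1) ^ m : ℤ[X]) : ℤ⟦X⟧))
      = PowerSeries.X ^ r * (PowerSeries.X + 1) ^ m := by
    simp [Polynomial.coe_mul, Polynomial.coe_pow, Polynomial.coe_add, Polynomial.coe_X,
      Polynomial.coe_one]
  rw [← mul_assoc, ← hW, PowerSeries.coeff_mul, Finset.Nat.sum_antidiagonal_eq_sum_range_succ_mk]
  refine Finset.sum_congr rfl fun a ha => ?_
  rw [Polynomial.coeff_coe, mul_comm (Polynomial.X ^ r) _, Polynomial.coeff_mul_X_pow',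
    ← coeffA]
  by_cases h : r ≤ a <;> simp [h, coeff_X_add_one_pow]

lemma expand (d i n : ℕ) (hn : 1 ≤ n) :
    PowerSeries.coeff i (((q n : ℤ[X]) : ℤ⟦X⟧) ^ d)
      = ∑ r ∈ range (d + 1), (d.choose r : ℤ) *
          ∑ a ∈ range (i + 1),
            (if r ≤ a then ((d - r).choose (a - r) : ℤ) else 0) * (Acoef (d - r) (i - a) (n - 1) : ℤ) := by
  have hsplit : ((q n : ℤ[X]) : ℤ⟦X⟧)
      = PowerSeries.X + (PowerSeries.X + 1) * ((q (n - 1) : ℤ[X]) : ℤ⟦X⟧) := by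
    rw [qsplit n hn]
    simp [Polynomial.coe_add, Polynomial.coe_mul, Polynomial.coe_X, Polynomial.coe_one]
  rw [hsplit, add_pow, map_sum]
  refine Finset.sum_congr rfl fun r hr => ?_
  rw [← map_natCast (PowerSeries.C (R := ℤ)) (d.choose r), PowerSeries.coeff_mul_C, mul_pow,
    coeff_term, mul_comm]

lemma sum_range_eq_of {g : ℕ → ℕ} {N M : ℕ} (h : ∀ k, g k ≠ 0 → k < N ∧ k < M) :
    ∑ k ∈ range N, g k = ∑ k ∈ range M, g k := by
  have hN : ∑ k ∈ range N, g k = ∑ k ∈ range (max N M), g k :=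
    Finset.sum_subset (Finset.range_subset_range.mpr (le_max_left _ _)) (fun x _ hx => by
      by_contra h0
      exact hx (Finset.mem_range.mpr (h x h0).1))
  have hM : ∑ k ∈ range M, g k = ∑ k ∈ range (max N M), g k :=
    Finset.sum_subset (Finset.range_subset_range.mpr (le_max_right _ _)) (fun x _ hx => by
      by_contra h0
      exact hx (Finset.mem_range.mpr (h x h0).2))
  rw [hN, hM]

lemma multinom (d r s t : ℕ) (h : r + s + t = d) :
    d.factorial / (r.factorial * s.factorial * t.factorial) = d.choose r * (d - r).choose s := by
  have h1 := Nat.choose_mul_factorial_mul_factorial (show r ≤ d by omega)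
  have h2 := Nat.choose_mul_factorial_mul_factorial (Nat.le_add_right s t)
  have hdr : d - r = s + t := by omega
  have hst : s + t - s = t := by omega
  have key : d.factorial
      = d.choose r * (d - r).choose s * (r.factorial * s.factorial * t.factorial) := by
    rw [← h1, hdr, ← h2, hst]
    ring
  rw [key, Nat.mul_div_cancel _ (by positivity)]

lemma inner2 (d i n r : ℕ) :
    ∑ a ∈ range (i + 1),
        (if r ≤ a then d.choose r * ((d - r).choose (a - r) * Acoef (d - r) (i - a) (n - 1)) else 0)
      = ∑ s ∈ range (d + 1),
          (if r + s ≤ i then d.choose r * ((d - r).choose s * Acoef (d - r) (i - r - s) (n - 1))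
            else 0) := by
  rw [← Finset.sum_filter]
  have hfil : (range (i + 1)).filter (fun a => r ≤ a) = Finset.Ico r (i + 1) := by
    ext a
    simp [Nat.lt_succ_iff]
    omega
  rw [hfil, Finset.sum_Ico_eq_sum_range]
  have hcong : ∀ k ∈ range (i + 1 - r),
      d.choose r * ((d - r).choose (r + k - r) * Acoef (d - r) (i - (r + k)) (n - 1))
        = if r + k ≤ i then d.choose r * ((d - r).choose k * Acoef (d - r) (i - r - k) (n - 1))
            else 0 := by
    intro k hk
    rw [Finset.mem_range] at hk
    have h1 : r + k ≤ i := by omega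
    rw [if_pos h1, Nat.add_sub_cancel_left, Nat.sub_sub]
  rw [Finset.sum_congr rfl hcong]
  apply sum_range_eq_of
  intro k hk
  by_cases h1 : r + k ≤ i
  · rw [if_pos h1] at hk
    have h2 : (d - r).choose k ≠ 0 := fun h0 => hk (by rw [h0]; ring)
    have h3 : k ≤ d - r := by
      by_contra h4
      exact h2 (Nat.choose_eq_zero_of_lt (by omega))
    omega
  · rw [if_neg h1] at hk
    exact absurd rfl hk

lemma inner1 (d i n r s : ℕ) (hr : r ≤ d) :
    ∑ t ∈ range (d + 1),
        (if r + s + t = d ∧ r + s ≤ i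
          then d.factorial / (r.factorial * s.factorial * t.factorial) *
            Acoef (d - r) (i - r - s) (n - 1)
          else 0)
      = if r + s ≤ i then d.choose r * ((d - r).choose s * Acoef (d - r) (i - r - s) (n - 1))
          else 0 := by
  by_cases h : r + s ≤ d ∧ r + s ≤ i
  · rw [Finset.sum_eq_single (d - (r + s))]
    · rw [if_pos ⟨by omega, h.2⟩, multinom d r s (d - (r + s)) (by omega), if_pos h.2, mul_assoc]
    · intro t _ ht
      apply if_neg
      rintro ⟨h1, -⟩
      exact ht (by omega)
    · intro hm
      exact absurd (Finset.mem_range.mpr (by omega)) hm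
  · rw [Finset.sum_eq_zero]
    · by_cases hi' : r + s ≤ i
      · have hd' : ¬ r + s ≤ d := fun hd => h ⟨hd, hi'⟩
        rw [if_pos hi', Nat.choose_eq_zero_of_lt (show d - r < s by omega)]
        ring
      · rw [if_neg hi']
    · intro t _
      apply if_neg
      rintro ⟨h1, h2⟩
      exact h ⟨by omega, h2⟩


/-- The recursion for the numbers `A_d(i,n)` (used in the proof of
Lemma 3.3 (inter-mult-lem3)): for `n ≥ 1`,
`A_d(i,n) = Σ_{r+s+t=d, r+s≤i} (d!/(r!·s!·t!)) · A_{d−r}(i−r−s, n−1)`. -/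
theorem stmt7 (d i n : ℕ) (hn : 1 ≤ n) :
    Acoef d i n =
      ∑ rst ∈ (Finset.range (d + 1) ×ˢ Finset.range (d + 1) ×ˢ Finset.range (d + 1)).filter
          (fun rst => rst.1 + rst.2.1 + rst.2.2 = d ∧ rst.1 + rst.2.1 ≤ i),
        d.factorial / (rst.1.factorial * rst.2.1.factorial * rst.2.2.factorial) *
          Acoef (d - rst.1) (i - rst.1 - rst.2.1) (n - 1) := by
  have step1 : (∑ rst ∈ (Finset.range (d + 1) ×ˢ Finset.range (d + 1) ×ˢ Finset.range (d + 1)).filter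
          (fun rst => rst.1 + rst.2.1 + rst.2.2 = d ∧ rst.1 + rst.2.1 ≤ i),
        d.factorial / (rst.1.factorial * rst.2.1.factorial * rst.2.2.factorial) *
          Acoef (d - rst.1) (i - rst.1 - rst.2.1) (n - 1))
      = ∑ r ∈ range (d + 1), ∑ s ∈ range (d + 1),
          (if r + s ≤ i then d.choose r * ((d - r).choose s * Acoef (d - r) (i - r - s) (n - 1))
            else 0) := by
    rw [Finset.sum_filter, Finset.sum_product]
    refine Finset.sum_congr rfl fun r hr => ?_
    rw [Finset.sum_product]
    refine Finset.sum_congr rfl fun s hs => ?_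
    exact inner1 d i n r s (by simpa [Nat.lt_succ_iff] using hr)
  rw [step1]
  have step2 : (Acoef d i n : ℤ)
      = ((∑ r ∈ range (d + 1), ∑ s ∈ range (d + 1),
          (if r + s ≤ i then d.choose r * ((d - r).choose s * Acoef (d - r) (i - r - s) (n - 1))
            else 0) : ℕ) : ℤ) := by
    rw [coeffA, expand d i n hn]
    push_cast
    refine Finset.sum_congr rfl fun r hr => ?_
    have h2 := congrArg (fun x : ℕ => (x : ℤ)) (inner2 d i n r)
    push_cast at h2
    rw [← h2, Finset.mul_sum]
    refine Finset.sum_congr rfl fun a ha => ?_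
    by_cases h : r ≤ a
    · rw [if_pos h, if_pos h]
    · rw [if_neg h, if_neg h]
      ring
  exact_mod_cast step2
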